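/- On a Kähler manifold, letting L* denote the adjoint of exterior multiplication by the Kähler form, for any unit complex number b one has the conjugation identity e^{ibL*} ∂̄ e^{−ibL*} = ∂̄ + b∂* = P. -/

import Mathlib

open Finset

open Finset

lemma alt_binom_complex (m : ℕ) (hm : m ≠ 0) :
    ∑ k ∈ range (m + 1), ((-1 : ℂ)) ^ k * (m.choose k : ℂ) = 0 := by
  have h0 := Int.alternating_sum_range_choose (n := m)
  have h1 : ((∑ i ∈ range (m + 1), (-1 : ℤ) ^ i * (m.choose i) : ℤ) : ℂ)
      = ((if m = 0 then 1 else 0 : ℤ) : ℂ) := by rw [h0]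
  push_cast at h1
  simpa [hm] using h1

lemma cauchy_coeff (m : ℕ) (hm : m ≠ 0) :
    ∑ p ∈ Finset.HasAntidiagonal.antidiagonal m,
      ((p.1.factorial : ℂ))⁻¹ * ((-1 : ℂ) ^ p.2 * ((p.2.factorial : ℂ))⁻¹) = 0 := by
  rw [Finset.Nat.sum_antidiagonal_eq_sum_range_succ_mk]
  have key : ∀ k ∈ range (m + 1),
      ((k.factorial : ℂ))⁻¹ * ((-1 : ℂ) ^ (m - k) * (((m - k).factorial : ℂ))⁻¹)
        = (m.factorial : ℂ)⁻¹ * ((-1 : ℂ) ^ (m - k) * (m.choose k : ℂ)) := by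
    intro k hk
    have hkm : k ≤ m := Nat.lt_succ_iff.mp (mem_range.mp hk)
    have hch : (m.choose k : ℂ) = m.factorial / (k.factorial * (m - k).factorial) :=
      Nat.cast_choose ℂ hkm
    rw [hch]
    have h1 : (k.factorial : ℂ) ≠ 0 := Nat.cast_ne_zero.mpr k.factorial_ne_zero
    have h2 : ((m - k).factorial : ℂ) ≠ 0 := Nat.cast_ne_zero.mpr (m - k).factorial_ne_zero
    have h3 : (m.factorial : ℂ) ≠ 0 := Nat.cast_ne_zero.mpr m.factorial_ne_zero
    field_simp
  rw [Finset.sum_congr rfl key, ← Finset.mul_sum]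
  have : ∑ k ∈ range (m + 1), (-1 : ℂ) ^ (m - k) * (m.choose k : ℂ) = 0 := by
    rw [← Finset.sum_range_reflect]
    have : ∀ k ∈ range (m + 1),
        (-1 : ℂ) ^ (m - (m - k)) * ((m.choose (m - k)) : ℂ)
        = (-1 : ℂ) ^ k * (m.choose k : ℂ) := by
      intro k hk
      have hkm : k ≤ m := Nat.lt_succ_iff.mp (mem_range.mp hk)
      rw [Nat.sub_sub_self hkm, Nat.choose_symm hkm]
    calc ∑ k ∈ range (m + 1), (-1:ℂ)^(m - (m + 1 - 1 - k)) * (m.choose (m + 1 - 1 - k) : ℂ)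
        = ∑ k ∈ range (m + 1), (-1:ℂ)^(m - (m - k)) * (m.choose (m - k) : ℂ) := by
          simp
      _ = ∑ k ∈ range (m + 1), (-1:ℂ)^k * (m.choose k : ℂ) := Finset.sum_congr rfl this
      _ = 0 := alt_binom_complex m hm
  rw [this, mul_zero]

lemma trunc_exp_mul_neg {A : Type*} [Ring A] [Algebra ℂ A] (x : A) (N : ℕ) (h : x ^ N = 0) :
    (∑ k ∈ range (N + 1), (k.factorial : ℂ)⁻¹ • x ^ k) *
      (∑ k ∈ range (N + 1), (k.factorial : ℂ)⁻¹ • (-x) ^ k) = 1 := by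
  rcases Nat.eq_zero_or_pos N with hN | hN
  · subst hN
    have h1 : (1 : A) = 0 := by simpa using h
    have hall : ∀ a : A, a = 0 := fun a => by rw [← mul_one a, h1, mul_zero]
    exact (hall _).trans (hall _).symm
  have hxm : ∀ m, N ≤ m → x ^ m = 0 := by
    intro m hm
    rw [← Nat.sub_add_cancel hm, pow_add, h, mul_zero]
  have hterm : ∀ k j : ℕ,
      ((k.factorial : ℂ)⁻¹ • x ^ k) * ((j.factorial : ℂ)⁻¹ • (-x) ^ j)
        = ((k.factorial : ℂ)⁻¹ * ((-1 : ℂ) ^ j * (j.factorial : ℂ)⁻¹)) • x ^ (k + j) := by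
    intro k j
    have hneg : (-x) ^ j = (-1 : ℂ) ^ j • x ^ j := by
      rw [← neg_one_smul ℂ x, smul_pow]
    rw [hneg, smul_mul_assoc, mul_smul_comm, mul_smul_comm, smul_smul, smul_smul, ← pow_add]
    ring_nf
  rw [Finset.sum_mul_sum]
  have step1 : ∀ k ∈ range (N + 1), ∀ j ∈ range (N + 1), True := fun _ _ _ _ => trivial
  calc ∑ k ∈ range (N + 1), ∑ j ∈ range (N + 1),
        ((k.factorial : ℂ)⁻¹ • x ^ k) * ((j.factorial : ℂ)⁻¹ • (-x) ^ j)
      = ∑ p ∈ (range (N + 1)) ×ˢ (range (N + 1)),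
          ((p.1.factorial : ℂ)⁻¹ * ((-1 : ℂ) ^ p.2 * (p.2.factorial : ℂ)⁻¹)) • x ^ (p.1 + p.2) := by
        rw [Finset.sum_product]
        exact Finset.sum_congr rfl fun k _ => Finset.sum_congr rfl fun j _ => hterm k j
    _ = ∑ p ∈ ((range (N + 1)) ×ˢ (range (N + 1))).filter (fun p => p.1 + p.2 < N),
          ((p.1.factorial : ℂ)⁻¹ * ((-1 : ℂ) ^ p.2 * (p.2.factorial : ℂ)⁻¹)) • x ^ (p.1 + p.2) := by
        refine (Finset.sum_filter_of_ne ?_).symm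
        intro p _ hne
        by_contra hlt
        exact hne (by rw [hxm _ (le_of_not_gt hlt), smul_zero])
    _ = ∑ m ∈ range N, ∑ p ∈ Finset.HasAntidiagonal.antidiagonal m,
          ((p.1.factorial : ℂ)⁻¹ * ((-1 : ℂ) ^ p.2 * (p.2.factorial : ℂ)⁻¹)) • x ^ (p.1 + p.2) := by
        rw [← Finset.sum_biUnion]
        · apply Finset.sum_congr _ fun _ _ => rfl
          ext p
          simp only [Finset.mem_biUnion, Finset.mem_filter, Finset.mem_product, mem_range,
            Finset.HasAntidiagonal.mem_antidiagonal]
          constructor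
          · rintro ⟨⟨h1, h2⟩, h3⟩
            exact ⟨p.1 + p.2, h3, rfl⟩
          · rintro ⟨m, hm, hp⟩
            omega
        · intro a _ c _ hac
          simp only [Finset.disjoint_left, Finset.HasAntidiagonal.mem_antidiagonal]
          intro p h1 h2
          exact hac (h1.symm.trans h2)
    _ = ∑ m ∈ range N, (∑ p ∈ Finset.HasAntidiagonal.antidiagonal m,
          ((p.1.factorial : ℂ)⁻¹ * ((-1 : ℂ) ^ p.2 * (p.2.factorial : ℂ)⁻¹))) • x ^ m := by
        refine Finset.sum_congr rfl fun m _ => ?_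
        rw [Finset.sum_smul]
        refine Finset.sum_congr rfl fun p hp => ?_
        rw [Finset.HasAntidiagonal.mem_antidiagonal.mp hp]
    _ = ∑ m ∈ range N, (if m = 0 then (1 : ℂ) else 0) • x ^ m := by
        refine Finset.sum_congr rfl fun m _ => ?_
        rcases Nat.eq_zero_or_pos m with rfl | hm
        · simp
        · rw [cauchy_coeff m hm.ne', if_neg hm.ne']
    _ = 1 := by
        rw [Finset.sum_congr rfl (fun m _ => ?_), Finset.sum_ite_eq' (range N) 0 (fun m => x ^ m)]
        · simp [Finset.mem_range.mpr hN]
        · split <;> simp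


/-- On a Kähler manifold, with `db = ∂̄`, `ps = ∂*`, and `Λ = L*` the adjoint Lefschetz
operator (nilpotent on forms: `Λ^N = 0`), the Kähler identities `∂* = [∂̄, −iΛ]` and
`[∂*, Λ] = 0` give the conjugation identity `e^{ibΛ} ∂̄ e^{−ibΛ} = ∂̄ + b∂* = P` for any
unit complex number `b`.  Since `Λ` is nilpotent the exponentials are the finite sums
`∑_{k<N} (ibΛ)^k / k!`. -/
theorem exp_conjugation_dbar_eq_P
    {A : Type*} [Ring A] [Algebra ℂ A]
    (db ps Λ : A) (b : ℂ) (hb : ‖b‖ = 1)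
    (N : ℕ) (hnil : Λ ^ N = 0)
    (hKahler1 : ps = -Complex.I • (db * Λ - Λ * db))
    (hKahler2 : ps * Λ = Λ * ps) :
    (∑ k ∈ Finset.range N, (k.factorial : ℂ)⁻¹ • ((Complex.I * b) • Λ) ^ k) * db *
      (∑ k ∈ Finset.range N, (k.factorial : ℂ)⁻¹ • ((-(Complex.I * b)) • Λ) ^ k)
    = db + b • ps := by
  rcases Nat.eq_zero_or_pos N with rfl | hN
  · have h1 : (1 : A) = 0 := by simpa using hnil
    have hall : ∀ a : A, a = 0 := fun a => by rw [← mul_one a, h1, mul_zero]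
    exact (hall _).trans (hall _).symm
  set x : A := (Complex.I * b) • Λ with hx
  set C : A := b • ps with hC
  have hxN : x ^ N = 0 := by rw [hx, smul_pow, hnil, smul_zero]
  -- commutator identity: x * db - db * x = C
  have hcomm : x * db = db * x + C := by
    rw [hx, hC, hKahler1, smul_smul, smul_mul_assoc, mul_smul_comm]
    rw [smul_sub]
    module
  -- C commutes with x
  have hCx : Commute x C := by
    show x * C = C * x
    rw [hx, hC, smul_mul_assoc, mul_smul_comm, smul_mul_assoc, mul_smul_comm,
      ← hKahler2, smul_smul, smul_smul, mul_comm b (Complex.I * b)]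
  -- pushing db through powers of x
  have hpush : ∀ k : ℕ, x ^ (k + 1) * db = db * x ^ (k + 1) + ((k + 1 : ℕ) : ℂ) • (x ^ k * C) := by
    intro k
    induction k with
    | zero => simpa using hcomm
    | succ k ih =>
      have hCxk : C * x ^ (k + 1) = x ^ (k + 1) * C := ((hCx.pow_left (k + 1)).symm).eq
      calc x ^ (k + 2) * db = x * (x ^ (k + 1) * db) := by rw [← mul_assoc, ← pow_succ']
        _ = x * (db * x ^ (k + 1)) + ((k + 1 : ℕ) : ℂ) • (x * (x ^ k * C)) := by
            rw [ih, mul_add, mul_smul_comm]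
        _ = (db * x + C) * x ^ (k + 1) + ((k + 1 : ℕ) : ℂ) • (x ^ (k + 1) * C) := by
            rw [← hcomm, mul_assoc, ← mul_assoc x (x ^ k) C, ← pow_succ']
        _ = db * x ^ (k + 2) + ((k + 2 : ℕ) : ℂ) • (x ^ (k + 1) * C) := by
            rw [add_mul, mul_assoc, ← pow_succ', hCxk]
            push_cast
            module
  -- extend sums from range N to range (N+1)
  have hextE : (∑ k ∈ range N, (k.factorial : ℂ)⁻¹ • x ^ k)
      = ∑ k ∈ range (N + 1), (k.factorial : ℂ)⁻¹ • x ^ k := by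
    rw [Finset.sum_range_succ, hxN, smul_zero, add_zero]
  have hextF : (∑ k ∈ range N, (k.factorial : ℂ)⁻¹ • (-x) ^ k)
      = ∑ k ∈ range (N + 1), (k.factorial : ℂ)⁻¹ • (-x) ^ k := by
    rw [Finset.sum_range_succ, neg_pow, hxN, mul_zero, smul_zero, add_zero]
  have hmx : (-(Complex.I * b)) • Λ = -x := by rw [hx, neg_smul]
  rw [hmx, hextE, hextF]
  set E : A := ∑ k ∈ range (N + 1), (k.factorial : ℂ)⁻¹ • x ^ k with hE
  set F : A := ∑ k ∈ range (N + 1), (k.factorial : ℂ)⁻¹ • (-x) ^ k with hF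
  have hEF : E * F = 1 := trunc_exp_mul_neg x N hxN
  -- key: E * db = db * E + E * C
  have hkey : E * db = db * E + E * C := by
    have h1 : E * db = ∑ k ∈ range (N + 1), (k.factorial : ℂ)⁻¹ • (x ^ k * db) := by
      rw [hE, Finset.sum_mul]
      exact Finset.sum_congr rfl fun k _ => smul_mul_assoc _ _ _
    rw [h1, Finset.sum_range_succ']
    have h2 : ∀ k ∈ range N,
        (((k + 1).factorial : ℂ))⁻¹ • (x ^ (k + 1) * db)
          = ((k + 1).factorial : ℂ)⁻¹ • (db * x ^ (k + 1)) + (k.factorial : ℂ)⁻¹ • (x ^ k * C) := by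
      intro k _
      rw [hpush k, smul_add, smul_smul]
      congr 2
      rw [Nat.factorial_succ]
      push_cast
      have hk1 : ((k : ℂ) + 1) ≠ 0 := by
        exact_mod_cast (Nat.cast_add_one_ne_zero k : ((k : ℂ) + 1) ≠ 0)
      have hkf : (k.factorial : ℂ) ≠ 0 := Nat.cast_ne_zero.mpr k.factorial_ne_zero
      field_simp
    rw [Finset.sum_congr rfl h2, Finset.sum_add_distrib]
    have h3 : (∑ k ∈ range N, ((k + 1).factorial : ℂ)⁻¹ • (db * x ^ (k + 1)))
        + (Nat.factorial 0 : ℂ)⁻¹ • (x ^ 0 * db) = db * E := by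
      rw [hE, Finset.mul_sum, Finset.sum_range_succ']
      simp [mul_smul_comm]
    have h4 : (∑ k ∈ range N, (k.factorial : ℂ)⁻¹ • (x ^ k * C)) = E * C := by
      rw [hE, Finset.sum_mul, Finset.sum_range_succ, hxN, smul_zero, zero_mul, add_zero]
      exact Finset.sum_congr rfl fun k _ => (smul_mul_assoc _ _ _).symm
    rw [add_right_comm, h3, h4]
  -- C commutes with F
  have hCF : Commute C F :=
    Commute.sum_right _ _ _ fun k _ => ((hCx.symm.neg_right.pow_right k).smul_right _)
  calc E * db * F = (db * E + E * C) * F := by rw [hkey]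
    _ = db * (E * F) + E * (C * F) := by rw [add_mul, mul_assoc, mul_assoc]
    _ = db * (E * F) + E * F * C := by rw [hCF.eq, mul_assoc]
    _ = db + C := by rw [hEF, mul_one, one_mul]
    _ = db + b • ps := by rw [hC]
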